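/- Let (X₁, X₂) be jointly Gaussian with means μ₁, μ₂, variances ν₁₁, ν₂₂ > 0 and covariance ν₁₂. Then E[φ(X₁)φ(X₂)] = (1/√((1+ν₁₁)(1+ν₂₂))) · φ₂(μ₁/√(1+ν₁₁), μ₂/√(1+ν₂₂); ν₁₂/√((1+ν₁₁)(1+ν₂₂))), where φ₂ is the bivariate standard normal density with the indicated correlation. -/

import Mathlib

open MeasureTheory ProbabilityTheory Real
open scoped NNReal

noncomputable def npdf (x : ℝ) : ℝ := (Real.sqrt (2 * Real.pi))⁻¹ * Real.exp (-(x ^ 2) / 2)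

noncomputable def ncdf (x : ℝ) : ℝ := ∫ t in Set.Iic x, npdf t

noncomputable def npdf2 (h k ρ : ℝ) : ℝ :=
  (2 * Real.pi * Real.sqrt (1 - ρ ^ 2))⁻¹ *
    Real.exp (-(h ^ 2 + k ^ 2 - 2 * ρ * h * k) / (2 * (1 - ρ ^ 2)))

noncomputable def P2 : Measure (ℝ × ℝ) :=
  (ProbabilityTheory.gaussianReal 0 1).prod (ProbabilityTheory.gaussianReal 0 1)

/- Auxiliary lemmas -/

lemma npdf_nonneg (x : ℝ) : 0 ≤ npdf x := by unfold npdf; positivity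

lemma npdf_le (x : ℝ) : npdf x ≤ (Real.sqrt (2 * Real.pi))⁻¹ := by
  unfold npdf
  have h1 : Real.exp (-(x ^ 2) / 2) ≤ 1 := by
    rw [Real.exp_le_one_iff]; nlinarith [sq_nonneg x]
  have h2 : (0:ℝ) ≤ (Real.sqrt (2 * Real.pi))⁻¹ := by positivity
  nlinarith

lemma continuous_npdf : Continuous npdf := by unfold npdf; fun_prop

lemma gauss_quad (p q r : ℝ) (hp : 0 < p) :
    ∫ x : ℝ, Real.exp (-(p * x ^ 2 + q * x + r))
      = Real.sqrt (π / p) * Real.exp (q ^ 2 / (4 * p) - r) := by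
  have hp' : p ≠ 0 := hp.ne'
  have key : ∀ x : ℝ, Real.exp (-(p * x ^ 2 + q * x + r))
      = Real.exp (q ^ 2 / (4 * p) - r) * Real.exp (-p * (x + q / (2 * p)) ^ 2) := by
    intro x
    rw [← Real.exp_add]
    congr 1
    field_simp
    ring
  simp_rw [key]
  rw [MeasureTheory.integral_const_mul,
    MeasureTheory.integral_add_right_eq_self (fun x => Real.exp (-p * x ^ 2)) (q / (2 * p)),
    integral_gaussian]
  ring

lemma gauss_conv (m c : ℝ) :
    ∫ y : ℝ, npdf y * npdf (m + c * y)
      = (Real.sqrt (1 + c ^ 2))⁻¹ * npdf (m / Real.sqrt (1 + c ^ 2)) := by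
  have hE : (0:ℝ) < 1 + c ^ 2 := by positivity
  have key : ∀ y : ℝ, npdf y * npdf (m + c * y)
      = (Real.sqrt (2 * π))⁻¹ ^ 2 *
          Real.exp (-((1 + c ^ 2) / 2 * y ^ 2 + (m * c) * y + m ^ 2 / 2)) := by
    intro y
    unfold npdf
    rw [show -((1 + c ^ 2) / 2 * y ^ 2 + (m * c) * y + m ^ 2 / 2)
        = (-(y ^ 2) / 2) + (-((m + c * y) ^ 2) / 2) from by ring, Real.exp_add]
    ring
  simp_rw [key]
  rw [MeasureTheory.integral_const_mul, gauss_quad _ _ _ (by positivity)]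
  rw [show π / ((1 + c ^ 2) / 2) = (2 * π) / (1 + c ^ 2) from by field_simp,
    Real.sqrt_div (by positivity : (0:ℝ) ≤ 2 * π)]
  rw [show (m * c) ^ 2 / (4 * ((1 + c ^ 2) / 2)) - m ^ 2 / 2
      = -((m / Real.sqrt (1 + c ^ 2)) ^ 2) / 2 from by
    rw [div_pow, Real.sq_sqrt hE.le]; field_simp; ring]
  unfold npdf
  have h2p : (0:ℝ) < Real.sqrt (2 * π) := Real.sqrt_pos.mpr (by positivity)
  have hEp : (0:ℝ) < Real.sqrt (1 + c ^ 2) := Real.sqrt_pos.mpr hE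
  field_simp

lemma gauss_triple (m₁ m₂ α β : ℝ) :
    ∫ x : ℝ, npdf x * (npdf (m₁ + α * x) * npdf (m₂ + β * x))
      = (2 * π * Real.sqrt (1 + α ^ 2 + β ^ 2))⁻¹ *
          Real.exp (-(m₁ ^ 2 * (1 + β ^ 2) + m₂ ^ 2 * (1 + α ^ 2) - 2 * α * β * m₁ * m₂)
            / (2 * (1 + α ^ 2 + β ^ 2))) := by
  have hE : (0:ℝ) < 1 + α ^ 2 + β ^ 2 := by positivity
  have key : ∀ x : ℝ, npdf x * (npdf (m₁ + α * x) * npdf (m₂ + β * x))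
      = (Real.sqrt (2 * π))⁻¹ ^ 3 *
          Real.exp (-((1 + α ^ 2 + β ^ 2) / 2 * x ^ 2 + (m₁ * α + m₂ * β) * x
            + (m₁ ^ 2 + m₂ ^ 2) / 2)) := by
    intro x
    unfold npdf
    rw [show -((1 + α ^ 2 + β ^ 2) / 2 * x ^ 2 + (m₁ * α + m₂ * β) * x + (m₁ ^ 2 + m₂ ^ 2) / 2)
        = (-(x ^ 2) / 2) + ((-((m₁ + α * x) ^ 2) / 2) + (-((m₂ + β * x) ^ 2) / 2)) from by ring,
      Real.exp_add, Real.exp_add]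
    ring
  simp_rw [key]
  rw [MeasureTheory.integral_const_mul, gauss_quad _ _ _ (by positivity)]
  rw [show π / ((1 + α ^ 2 + β ^ 2) / 2) = (2 * π) / (1 + α ^ 2 + β ^ 2) from by
      field_simp,
    Real.sqrt_div (by positivity : (0:ℝ) ≤ 2 * π)]
  rw [show (m₁ * α + m₂ * β) ^ 2 / (4 * ((1 + α ^ 2 + β ^ 2) / 2)) - (m₁ ^ 2 + m₂ ^ 2) / 2
      = -(m₁ ^ 2 * (1 + β ^ 2) + m₂ ^ 2 * (1 + α ^ 2) - 2 * α * β * m₁ * m₂)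
          / (2 * (1 + α ^ 2 + β ^ 2)) from by field_simp; ring]
  have h2 : Real.sqrt (2 * π) ^ 2 = 2 * π := Real.sq_sqrt (by positivity)
  have h2p : (0:ℝ) < Real.sqrt (2 * π) := Real.sqrt_pos.mpr (by positivity)
  have hEp : (0:ℝ) < Real.sqrt (1 + α ^ 2 + β ^ 2) := Real.sqrt_pos.mpr hE
  rw [← h2]
  field_simp
  ring
  rw [Real.sqrt_sq (Real.sqrt_nonneg _)]

lemma integral_gaussianReal01 (g : ℝ → ℝ) :
    ∫ x, g x ∂(gaussianReal 0 1) = ∫ x : ℝ, npdf x * g x := by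
  rw [gaussianReal_of_var_ne_zero 0 one_ne_zero]
  rw [show (gaussianPDF 0 1)
      = fun x => ((Real.toNNReal (gaussianPDFReal 0 1 x) : ℝ≥0) : ENNReal) from rfl]
  rw [integral_withDensity_eq_integral_smul (measurable_gaussianPDFReal 0 1).real_toNNReal g]
  congr 1 with x
  rw [NNReal.smul_def, smul_eq_mul, Real.coe_toNNReal _ (gaussianPDFReal_nonneg 0 1 x)]
  congr 1
  simp [gaussianPDFReal, npdf]

lemma integrable_main (μ₁ μ₂ a b c : ℝ) :
    Integrable (fun w : ℝ × ℝ => npdf (μ₁ + a * w.1) * npdf (μ₂ + b * w.1 + c * w.2))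
      ((gaussianReal 0 1).prod (gaussianReal 0 1)) := by
  have hc : Continuous fun w : ℝ × ℝ => npdf (μ₁ + a * w.1) * npdf (μ₂ + b * w.1 + c * w.2) := by
    apply Continuous.mul <;> apply continuous_npdf.comp <;> fun_prop
  apply Integrable.mono'
    (integrable_const ((Real.sqrt (2 * Real.pi))⁻¹ * (Real.sqrt (2 * Real.pi))⁻¹))
    hc.aestronglyMeasurable
  filter_upwards with w
  rw [Real.norm_eq_abs, abs_of_nonneg (mul_nonneg (npdf_nonneg _) (npdf_nonneg _))]
  exact mul_le_mul (npdf_le _) (npdf_le _) (npdf_nonneg _) (by positivity)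

lemma rhs_eq (a b c μ₁ μ₂ : ℝ) :
    (Real.sqrt ((1 + a ^ 2) * (1 + (b ^ 2 + c ^ 2))))⁻¹ *
      npdf2 (μ₁ / Real.sqrt (1 + a ^ 2)) (μ₂ / Real.sqrt (1 + (b ^ 2 + c ^ 2)))
        (a * b / Real.sqrt ((1 + a ^ 2) * (1 + (b ^ 2 + c ^ 2))))
    = (2 * π * Real.sqrt ((1 + a ^ 2) * (1 + (b ^ 2 + c ^ 2)) - (a * b) ^ 2))⁻¹ *
        Real.exp (-(μ₁ ^ 2 * (1 + (b ^ 2 + c ^ 2)) + μ₂ ^ 2 * (1 + a ^ 2) - 2 * (a * b) * μ₁ * μ₂)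
          / (2 * ((1 + a ^ 2) * (1 + (b ^ 2 + c ^ 2)) - (a * b) ^ 2))) := by
  have hS₁ : (0:ℝ) < 1 + a ^ 2 := by positivity
  have hS₂ : (0:ℝ) < 1 + (b ^ 2 + c ^ 2) := by positivity
  have hD : (0:ℝ) < (1 + a ^ 2) * (1 + (b ^ 2 + c ^ 2)) - (a * b) ^ 2 := by
    nlinarith [sq_nonneg a, sq_nonneg b, sq_nonneg c, sq_nonneg (a*c)]
  have hS : (0:ℝ) < (1 + a ^ 2) * (1 + (b ^ 2 + c ^ 2)) := by positivity
  have hu : Real.sqrt (1 + a ^ 2) ^ 2 = 1 + a ^ 2 := Real.sq_sqrt hS₁.le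
  have hv : Real.sqrt (1 + (b ^ 2 + c ^ 2)) ^ 2 = 1 + (b ^ 2 + c ^ 2) := Real.sq_sqrt hS₂.le
  have hup : (0:ℝ) < Real.sqrt (1 + a ^ 2) := Real.sqrt_pos.mpr hS₁
  have hvp : (0:ℝ) < Real.sqrt (1 + (b ^ 2 + c ^ 2)) := Real.sqrt_pos.mpr hS₂
  have hρ : 1 - (a * b / Real.sqrt ((1 + a ^ 2) * (1 + (b ^ 2 + c ^ 2)))) ^ 2
      = ((1 + a ^ 2) * (1 + (b ^ 2 + c ^ 2)) - (a * b) ^ 2)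
          / ((1 + a ^ 2) * (1 + (b ^ 2 + c ^ 2))) := by
    rw [div_pow, Real.sq_sqrt hS.le]
    field_simp
  unfold npdf2
  rw [hρ, Real.sqrt_div hD.le, Real.sqrt_mul hS₁.le]
  rw [show -((μ₁ / Real.sqrt (1 + a ^ 2)) ^ 2 + (μ₂ / Real.sqrt (1 + (b ^ 2 + c ^ 2))) ^ 2
        - 2 * (a * b / (Real.sqrt (1 + a ^ 2) * Real.sqrt (1 + (b ^ 2 + c ^ 2))))
            * (μ₁ / Real.sqrt (1 + a ^ 2)) * (μ₂ / Real.sqrt (1 + (b ^ 2 + c ^ 2))))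
      / (2 * (((1 + a ^ 2) * (1 + (b ^ 2 + c ^ 2)) - (a * b) ^ 2)
          / ((1 + a ^ 2) * (1 + (b ^ 2 + c ^ 2)))))
      = -(μ₁ ^ 2 * (1 + (b ^ 2 + c ^ 2)) + μ₂ ^ 2 * (1 + a ^ 2) - 2 * (a * b) * μ₁ * μ₂)
          / (2 * ((1 + a ^ 2) * (1 + (b ^ 2 + c ^ 2)) - (a * b) ^ 2)) from by
    set u := Real.sqrt (1 + a ^ 2)
    set v := Real.sqrt (1 + (b ^ 2 + c ^ 2))
    have hD2 : u ^ 2 * v ^ 2 - (a * b) ^ 2 ≠ 0 := by rw [hu, hv]; exact hD.ne'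
    rw [← hu, ← hv]
    field_simp [hD2]]
  have hwp : (0:ℝ) < Real.sqrt ((1 + a ^ 2) * (1 + (b ^ 2 + c ^ 2)) - (a * b) ^ 2) :=
    Real.sqrt_pos.mpr hD
  field_simp

lemma lhs_eq (a b c μ₁ μ₂ : ℝ) :
    (Real.sqrt (1 + c ^ 2))⁻¹ *
      ((2 * π * Real.sqrt (1 + a ^ 2 + (b / Real.sqrt (1 + c ^ 2)) ^ 2))⁻¹ *
        Real.exp (-((μ₁ ^ 2 * (1 + (b / Real.sqrt (1 + c ^ 2)) ^ 2)
              + (μ₂ / Real.sqrt (1 + c ^ 2)) ^ 2 * (1 + a ^ 2)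
              - 2 * a * (b / Real.sqrt (1 + c ^ 2)) * μ₁ * (μ₂ / Real.sqrt (1 + c ^ 2))))
          / (2 * (1 + a ^ 2 + (b / Real.sqrt (1 + c ^ 2)) ^ 2))))
    = (2 * π * Real.sqrt ((1 + a ^ 2) * (1 + (b ^ 2 + c ^ 2)) - (a * b) ^ 2))⁻¹ *
        Real.exp (-(μ₁ ^ 2 * (1 + (b ^ 2 + c ^ 2)) + μ₂ ^ 2 * (1 + a ^ 2)
            - 2 * (a * b) * μ₁ * μ₂)
          / (2 * ((1 + a ^ 2) * (1 + (b ^ 2 + c ^ 2)) - (a * b) ^ 2))) := by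
  have hc2 : (0:ℝ) < 1 + c ^ 2 := by positivity
  have hq : Real.sqrt (1 + c ^ 2) ^ 2 = 1 + c ^ 2 := Real.sq_sqrt hc2.le
  have hqp : (0:ℝ) < Real.sqrt (1 + c ^ 2) := Real.sqrt_pos.mpr hc2
  have hD : (0:ℝ) < (1 + a ^ 2) * (1 + (b ^ 2 + c ^ 2)) - (a * b) ^ 2 := by
    nlinarith [sq_nonneg a, sq_nonneg b, sq_nonneg c, sq_nonneg (a * c)]
  set q := Real.sqrt (1 + c ^ 2) with hqdef
  have hc2q : c ^ 2 = q ^ 2 - 1 := by rw [hq]; ring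
  rw [hc2q] at hD ⊢
  have hq0 : q ≠ 0 := hqp.ne'
  have hA : 1 + a ^ 2 + (b / q) ^ 2
      = ((1 + a ^ 2) * (1 + (b ^ 2 + (q ^ 2 - 1))) - (a * b) ^ 2) / q ^ 2 := by
    field_simp; ring
  rw [hA, Real.sqrt_div hD.le, Real.sqrt_sq hqp.le]
  rw [show -((μ₁ ^ 2 * (1 + (b / q) ^ 2) + (μ₂ / q) ^ 2 * (1 + a ^ 2)
          - 2 * a * (b / q) * μ₁ * (μ₂ / q)))
        / (2 * (((1 + a ^ 2) * (1 + (b ^ 2 + (q ^ 2 - 1))) - (a * b) ^ 2) / q ^ 2))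
      = -(μ₁ ^ 2 * (1 + (b ^ 2 + (q ^ 2 - 1))) + μ₂ ^ 2 * (1 + a ^ 2)
          - 2 * (a * b) * μ₁ * μ₂)
        / (2 * ((1 + a ^ 2) * (1 + (b ^ 2 + (q ^ 2 - 1))) - (a * b) ^ 2)) from by
    field_simp [hD.ne']
    ring]
  have hwp : (0:ℝ) < Real.sqrt ((1 + a ^ 2) * (1 + (b ^ 2 + (q ^ 2 - 1))) - (a * b) ^ 2) :=
    Real.sqrt_pos.mpr hD
  field_simp

theorem gaussian_expectation_npdf_mul_npdf (μ₁ μ₂ ν₁₁ ν₂₂ ν₁₂ a b c : ℝ)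
    (h11 : ν₁₁ = a ^ 2) (h22 : ν₂₂ = b ^ 2 + c ^ 2) (h12 : ν₁₂ = a * b)
    (hp1 : 0 < ν₁₁) (hp2 : 0 < ν₂₂) :
    ∫ w : ℝ × ℝ, npdf (μ₁ + a * w.1) * npdf (μ₂ + b * w.1 + c * w.2) ∂P2
      = (Real.sqrt ((1 + ν₁₁) * (1 + ν₂₂)))⁻¹ *
          npdf2 (μ₁ / Real.sqrt (1 + ν₁₁)) (μ₂ / Real.sqrt (1 + ν₂₂))
            (ν₁₂ / Real.sqrt ((1 + ν₁₁) * (1 + ν₂₂))) := by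
  subst h11 h22 h12
  unfold P2
  rw [MeasureTheory.integral_prod _ (integrable_main μ₁ μ₂ a b c)]
  simp_rw [integral_gaussianReal01]
  have inner_eq : ∀ x : ℝ,
      (∫ y : ℝ, npdf y * (npdf (μ₁ + a * x) * npdf (μ₂ + b * x + c * y)))
        = npdf (μ₁ + a * x) *
            ((Real.sqrt (1 + c ^ 2))⁻¹ * npdf ((μ₂ + b * x) / Real.sqrt (1 + c ^ 2))) := by
    intro x
    rw [show (fun y => npdf y * (npdf (μ₁ + a * x) * npdf (μ₂ + b * x + c * y)))
        = fun y => npdf (μ₁ + a * x) * (npdf y * npdf (μ₂ + b * x + c * y)) from by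
      funext y; ring]
    rw [MeasureTheory.integral_const_mul, gauss_conv (μ₂ + b * x) c]
  simp_rw [inner_eq]
  rw [show (fun x => npdf x * (npdf (μ₁ + a * x) *
        ((Real.sqrt (1 + c ^ 2))⁻¹ * npdf ((μ₂ + b * x) / Real.sqrt (1 + c ^ 2)))))
      = fun x => (Real.sqrt (1 + c ^ 2))⁻¹ * (npdf x * (npdf (μ₁ + a * x) *
          npdf (μ₂ / Real.sqrt (1 + c ^ 2) + b / Real.sqrt (1 + c ^ 2) * x))) from by
    funext x
    rw [show (μ₂ + b * x) / Real.sqrt (1 + c ^ 2)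
        = μ₂ / Real.sqrt (1 + c ^ 2) + b / Real.sqrt (1 + c ^ 2) * x from by ring]
    ring]
  rw [MeasureTheory.integral_const_mul,
    gauss_triple μ₁ (μ₂ / Real.sqrt (1 + c ^ 2)) a (b / Real.sqrt (1 + c ^ 2))]
  rw [rhs_eq a b c μ₁ μ₂]
  exact lhs_eq a b c μ₁ μ₂
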